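/- For the p-adic Plancherel measure μ_p on [0, π] and the Chebyshev functions X_m(θ) = sin((m+1)θ)/sin θ, one has ∫_0^π X_m(θ) dμ_p(θ) = p^{−m/2} if m is even and 0 if m is odd. -/

import Mathlib

open Real intervalIntegral


noncomputable def Dk (q θ : ℝ) : ℝ := 1 + q^2 - 2*q*Real.cos (2*θ)

lemma Dk_pos {q : ℝ} (hq0 : 0 < q) (hq1 : q < 1) (θ : ℝ) : 0 < Dk q θ := by
  have h1 := Real.cos_le_one (2*θ)
  have h2 := Real.neg_one_le_cos (2*θ)
  unfold Dk; nlinarith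

lemma Dk_cont (q : ℝ) : Continuous (Dk q) := by
  unfold Dk; fun_prop

lemma intCos {q : ℝ} (hq0 : 0 < q) (hq1 : q < 1) (c : ℝ) :
    IntervalIntegrable (fun θ => Real.cos (c*θ) / Dk q θ) MeasureTheory.volume 0 π := by
  apply Continuous.intervalIntegrable
  exact (Real.continuous_cos.comp (continuous_const.mul continuous_id)).div (Dk_cont q)
    (fun θ => (Dk_pos hq0 hq1 θ).ne')

lemma hasDerivAt_G {q : ℝ} (hq0 : 0 < q) (hq1 : q < 1) (θ : ℝ) :
    HasDerivAt (fun x => (x + Real.arctan (q * Real.sin (2*x) / (1 - q * Real.cos (2*x)))) / (1 - q^2))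
      (1 / Dk q θ) θ := by
  have hv : 0 < 1 - q * Real.cos (2*θ) := by
    nlinarith [Real.cos_le_one (2*θ), Real.neg_one_le_cos (2*θ)]
  have h2 : HasDerivAt (fun x : ℝ => 2*x) 2 θ := by
    simpa using (hasDerivAt_id θ).const_mul 2
  have hu : HasDerivAt (fun x => q * Real.sin (2*x)) (q * (Real.cos (2*θ) * 2)) θ :=
    ((Real.hasDerivAt_sin (2*θ)).comp θ h2).const_mul q
  have hw : HasDerivAt (fun x => 1 - q * Real.cos (2*x)) (-(q * (-Real.sin (2*θ) * 2))) θ :=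
    (((Real.hasDerivAt_cos (2*θ)).comp θ h2).const_mul q).const_sub 1
  have hdiv := hu.div hw hv.ne'
  have harc := (Real.hasDerivAt_arctan (q * Real.sin (2*θ) / (1 - q * Real.cos (2*θ)))).comp θ hdiv
  have := ((hasDerivAt_id θ).add harc).div_const (1 - q^2)
  refine this.congr_deriv (Eq.symm ?_)
  have hD := Dk_pos hq0 hq1 θ
  have hq2 : (1:ℝ) - q^2 ≠ 0 := by nlinarith
  have hsc := Real.sin_sq_add_cos_sq (2*θ)
  unfold Dk at *
  field_simp
  rw [div_eq_iff (ne_of_gt (by linarith))]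
  linear_combination (2*q^2 - 2*q^3*Real.cos (2*θ)) * hsc

lemma K0 {q : ℝ} (hq0 : 0 < q) (hq1 : q < 1) :
    ∫ θ in (0:ℝ)..π, 1 / Dk q θ = π / (1 - q^2) := by
  rw [intervalIntegral.integral_eq_sub_of_hasDerivAt
    (f := fun x => (x + Real.arctan (q * Real.sin (2*x) / (1 - q * Real.cos (2*x)))) / (1 - q^2))
    (fun x _ => hasDerivAt_G hq0 hq1 x)
    (by simpa using intCos hq0 hq1 0)]
  · simp [Real.sin_two_pi, Real.cos_two_pi]

lemma cos_int_zero (n : ℕ) : ∫ θ in (0:ℝ)..π, Real.cos ((n+1) * θ) = 0 := by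
  have hc : ((n:ℝ)+1) ≠ 0 := by positivity
  have h := intervalIntegral.integral_comp_mul_left (a := (0:ℝ)) (b := π)
    (fun x => Real.cos x) hc
  simp only [mul_zero] at h
  rw [h, integral_cos]
  have : ((n:ℝ)+1) * π = ((n+1 : ℕ) : ℝ) * π := by push_cast; ring
  rw [this, Real.sin_nat_mul_pi]
  simp

lemma Kodd {q : ℝ} {n : ℕ} (hn : Odd n) :
    ∫ θ in (0:ℝ)..π, Real.cos (n*θ) / Dk q θ = 0 := by
  have hflip := intervalIntegral.integral_comp_sub_left
    (fun θ => Real.cos (n*θ) / Dk q θ) π (a := 0) (b := π)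
  simp only [sub_self, sub_zero] at hflip
  have heq : ∀ θ : ℝ, Real.cos ((n:ℝ)*(π - θ)) / Dk q (π - θ) = -(Real.cos (n*θ) / Dk q θ) := by
    intro θ
    have h1 : Real.cos ((n:ℝ)*(π - θ)) = -Real.cos (n*θ) := by
      have e : (n:ℝ)*(π-θ) = n*π - n*θ := by ring
      rw [e, Real.cos_nat_mul_pi_sub, hn.neg_one_pow]
      ring
    have h2 : Dk q (π - θ) = Dk q θ := by
      unfold Dk
      have e : 2*(π-θ) = (1:ℕ)*(2*π) - 2*θ := by push_cast; ring
      rw [e, Real.cos_nat_mul_two_pi_sub]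
    rw [h1, h2, neg_div]
  simp only [heq] at hflip
  rw [intervalIntegral.integral_neg] at hflip
  linarith

lemma K2 {q : ℝ} (hq0 : 0 < q) (hq1 : q < 1) :
    ∫ θ in (0:ℝ)..π, Real.cos (2*θ) / Dk q θ = π * q / (1 - q^2) := by
  have hptw : ∀ θ ∈ Set.uIcc (0:ℝ) π, Real.cos (2*θ) / Dk q θ
      = (1+q^2)/(2*q) * (Real.cos (0*θ) / Dk q θ) - 1/(2*q) := by
    intro θ _
    have hD := (Dk_pos hq0 hq1 θ).ne'
    rw [show (0:ℝ)*θ = 0 by ring, Real.cos_zero]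
    unfold Dk at *
    have hDi := mul_inv_cancel₀ hD
    have hqi := mul_inv_cancel₀ hq0.ne'
    linear_combination (-(q⁻¹/2)) * hDi - Real.cos (2*θ) * (1 + q^2 - 2*q*Real.cos (2*θ))⁻¹ * hqi
  rw [intervalIntegral.integral_congr hptw,
    intervalIntegral.integral_sub (((intCos hq0 hq1 0).const_mul _)) intervalIntegrable_const,
    intervalIntegral.integral_const_mul, intervalIntegral.integral_const]
  have h0 : ∫ θ in (0:ℝ)..π, Real.cos (0*θ) / Dk q θ = π / (1-q^2) := by
    rw [← K0 hq0 hq1]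
    congr 1; ext θ; rw [show (0:ℝ)*θ = 0 by ring, Real.cos_zero]
  rw [h0]
  have hq2 : (1:ℝ) - q^2 ≠ 0 := by nlinarith
  have hq : q ≠ 0 := hq0.ne'
  rw [smul_eq_mul]
  field_simp
  ring

lemma Krec {q : ℝ} (hq0 : 0 < q) (hq1 : q < 1) (c : ℝ) :
    ∫ θ in (0:ℝ)..π, Real.cos ((c+4)*θ) / Dk q θ
      = (1+q^2)/q * (∫ θ in (0:ℝ)..π, Real.cos ((c+2)*θ) / Dk q θ)
        - (∫ θ in (0:ℝ)..π, Real.cos (c*θ) / Dk q θ)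
        - (1/q) * (∫ θ in (0:ℝ)..π, Real.cos ((c+2)*θ)) := by
  have hptw : ∀ θ ∈ Set.uIcc (0:ℝ) π, Real.cos ((c+4)*θ) / Dk q θ
      = (1+q^2)/q * (Real.cos ((c+2)*θ) / Dk q θ) - Real.cos (c*θ) / Dk q θ
        - (1/q) * Real.cos ((c+2)*θ) := by
    intro θ _
    have hD := (Dk_pos hq0 hq1 θ).ne'
    have hcc := Real.cos_add_cos ((c+4)*θ) (c*θ)
    rw [show ((c+4)*θ + c*θ)/2 = (c+2)*θ by ring, show ((c+4)*θ - c*θ)/2 = 2*θ by ring] at hcc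
    unfold Dk at *
    have hDi := mul_inv_cancel₀ hD
    have hqi := mul_inv_cancel₀ hq0.ne'
    linear_combination (1 + q^2 - 2*q*Real.cos (2*θ))⁻¹ * hcc - q⁻¹ * Real.cos ((c+2)*θ) * hDi - 2 * Real.cos (2*θ) * Real.cos ((c+2)*θ) * (1 + q^2 - 2*q*Real.cos (2*θ))⁻¹ * hqi
  rw [intervalIntegral.integral_congr hptw,
    intervalIntegral.integral_sub
      (((intCos hq0 hq1 (c+2)).const_mul _).sub (intCos hq0 hq1 c))
      ((Continuous.intervalIntegrable (by fun_prop) _ _).const_mul (1/q)),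
    intervalIntegral.integral_sub ((intCos hq0 hq1 (c+2)).const_mul _) (intCos hq0 hq1 c),
    intervalIntegral.integral_const_mul, intervalIntegral.integral_const_mul]

lemma Keven {q : ℝ} (hq0 : 0 < q) (hq1 : q < 1) (k : ℕ) :
    ∫ θ in (0:ℝ)..π, Real.cos ((2*k : ℝ)*θ) / Dk q θ = π * q^k / (1 - q^2) := by
  induction k using Nat.twoStepInduction with
  | zero =>
    have hc : ∀ θ ∈ Set.uIcc (0:ℝ) π, Real.cos ((2*((0:ℕ):ℝ))*θ) / Dk q θ = 1 / Dk q θ := by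
      intro θ _; norm_num
    rw [intervalIntegral.integral_congr hc, K0 hq0 hq1]; norm_num
  | one =>
    have hc : ∀ θ ∈ Set.uIcc (0:ℝ) π, Real.cos ((2*((1:ℕ):ℝ))*θ) / Dk q θ = Real.cos (2*θ) / Dk q θ := by
      intro θ _; norm_num
    rw [intervalIntegral.integral_congr hc, K2 hq0 hq1]; norm_num
  | more k ih1 ih0 =>
    have hrec := Krec hq0 hq1 (2*(k:ℝ))
    rw [show (2*(k:ℝ)) + 2 = 2*((k:ℝ)+1) by ring, show (2*(k:ℝ)) + 4 = 2*((k:ℝ)+2) by ring] at hrec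
    have hz : ∫ θ in (0:ℝ)..π, Real.cos (2*((k:ℝ)+1)*θ) = 0 := by
      have := cos_int_zero (2*k+1)
      rw [← this]
      congr 1; ext θ; congr 1; push_cast; ring
    have hk2 : (2*((k:ℝ)+2)) = 2*(((k+2 : ℕ)):ℝ) := by push_cast; ring
    have hk1 : (2*((k:ℝ)+1)) = 2*(((k+1 : ℕ)):ℝ) := by push_cast; ring
    rw [hk1] at hrec hz
    rw [← hk2, hrec, hz, ih1, ih0]
    have hq2 : (1:ℝ) - q^2 ≠ 0 := by nlinarith
    field_simp
    ring

/-- The `m`-th moment of the `p`-adic Plancherel measure against the Chebyshev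
function `X_m(θ) = sin((m+1)θ)/sin θ` equals `p^{-m/2}` for even `m` and `0` for odd `m`. -/
theorem stmt7 (p : ℝ) (hp : 1 < p) (m : ℕ) :
    ∫ θ in (0:ℝ)..π,
      (Real.sin ((m + 1) * θ) / Real.sin θ) *
        ((2 / π) * (1 + p⁻¹) * Real.sin θ ^ 2 /
          ((1 - p⁻¹) ^ 2 + 4 * p⁻¹ * Real.sin θ ^ 2)) =
      if Even m then p ^ (-(m : ℝ) / 2) else 0 := by
  have hp0 : 0 < p := lt_trans one_pos hp
  set q : ℝ := p⁻¹ with hqdef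
  have hq0 : 0 < q := inv_pos.mpr hp0
  have hq1 : q < 1 := by
    rw [hqdef, inv_lt_one_iff₀]; right; exact hp
  have hq2 : (1:ℝ) - q^2 ≠ 0 := by nlinarith
  have hπ : (π:ℝ) ≠ 0 := Real.pi_ne_zero
  have hDd : ∀ θ : ℝ, (1 - q)^2 + 4*q*Real.sin θ^2 = Dk q θ := by
    intro θ
    unfold Dk; rw [Real.cos_two_mul]
    linear_combination (4*q) * Real.sin_sq_add_cos_sq θ
  have hptw : ∀ θ ∈ Set.uIcc (0:ℝ) π,
      (Real.sin ((m + 1) * θ) / Real.sin θ) *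
        ((2 / π) * (1 + q) * Real.sin θ ^ 2 /
          ((1 - q) ^ 2 + 4 * q * Real.sin θ ^ 2))
      = (1+q)/π * (Real.cos ((m:ℝ)*θ)/Dk q θ - Real.cos (((m:ℝ)+2)*θ)/Dk q θ) := by
    intro θ _
    by_cases hs : Real.sin θ = 0
    · have hsc := Real.sin_sq_add_cos_sq θ
      have h2c : Real.cos (2*θ) = 1 := by rw [Real.cos_two_mul]; nlinarith
      have h2s : Real.sin (2*θ) = 0 := by rw [Real.sin_two_mul, hs]; ring
      have hcc : Real.cos (((m:ℝ)+2)*θ) = Real.cos ((m:ℝ)*θ) := by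
        rw [show ((m:ℝ)+2)*θ = (m:ℝ)*θ + 2*θ by ring, Real.cos_add, h2c, h2s]
        ring
      rw [hcc, hs]
      ring
    · have hD := (Dk_pos hq0 hq1 θ).ne'
      have hcsc := Real.cos_sub_cos ((m:ℝ)*θ) (((m:ℝ)+2)*θ)
      rw [show ((m:ℝ)*θ + ((m:ℝ)+2)*θ)/2 = ((m:ℝ)+1)*θ by ring,
        show ((m:ℝ)*θ - ((m:ℝ)+2)*θ)/2 = -θ by ring, Real.sin_neg] at hcsc
      rw [← hDd θ] at hD
      rw [← hDd θ]
      field_simp [hD]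
      rw [show θ * ((m:ℝ) + 2) = ((m:ℝ) + 2) * θ by ring]
      linear_combination -hcsc
  rw [intervalIntegral.integral_congr hptw, intervalIntegral.integral_const_mul,
    intervalIntegral.integral_sub (intCos hq0 hq1 _) (intCos hq0 hq1 _)]
  by_cases hm : Even m
  · obtain ⟨k, hk⟩ := hm
    have hmk : (m:ℝ) = 2*(k:ℝ) := by rw [hk]; push_cast; ring
    have hmk2 : (m:ℝ) + 2 = 2*(((k+1:ℕ)):ℝ) := by rw [hk]; push_cast; ring
    rw [if_pos ⟨k, hk⟩, hmk2, hmk, Keven hq0 hq1 k, Keven hq0 hq1 (k+1)]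
    have hrp : p ^ (-(2*((k:ℝ))) / 2) = q^k := by
      rw [show (-(2*((k:ℝ)))/2) = -(k:ℝ) by ring, Real.rpow_neg hp0.le,
        Real.rpow_natCast, hqdef, inv_pow]
    rw [hrp]
    field_simp
    ring
  · have hodd : Odd m := Nat.not_even_iff_odd.mp hm
    have hmk2 : (m:ℝ) + 2 = (((m+2:ℕ)):ℝ) := by push_cast; ring
    rw [if_neg hm, hmk2, Kodd hodd, Kodd (hodd.add_even even_two)]
    ring
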